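/- (Lindenbaum lemma for acceptable sets) If Φ is countably infinite, L ⊆ Φ, and Γ is a set of sentences over L that is AX-consistent and acceptable with respect to L, then Γ can be extended to a set of sentences over L that is both acceptable and maximal AX-consistent with respect to L. -/

import Mathlib

namespace AwarenessPaper

inductive Fm : Type
  | prop : ℕ → Fm
  | var  : ℕ → Fm
  | neg  : Fm → Fm
  | and  : Fm → Fm → Fm
  | k    : ℕ → Fm → Fm
  | a    : ℕ → Fm → Fm
  | x    : ℕ → Fm → Fm
  | all  : ℕ → Fm → Fm

namespace Fm

def props : Fm → Set ℕ
  | .prop p => {p}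
  | .var _ => ∅
  | .neg φ => props φ
  | .and φ ψ => props φ ∪ props ψ
  | .k _ φ => props φ
  | .a _ φ => props φ
  | .x _ φ => props φ
  | .all _ φ => props φ

def free : Fm → Set ℕ
  | .prop _ => ∅
  | .var v => {v}
  | .neg φ => free φ
  | .and φ ψ => free φ ∪ free ψ
  | .k _ φ => free φ
  | .a _ φ => free φ
  | .x _ φ => free φ
  | .all v φ => free φ \ {v}

def qcount : Fm → ℕ
  | .prop _ => 0
  | .var _ => 0
  | .neg φ => qcount φ
  | .and φ ψ => max (qcount φ) (qcount ψ)
  | .k _ φ => qcount φ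
  | .a _ φ => qcount φ
  | .x _ φ => qcount φ
  | .all _ φ => qcount φ + 1

def substV (v : ℕ) (ψ : Fm) : Fm → Fm
  | .prop p => .prop p
  | .var u => if u = v then ψ else .var u
  | .neg φ => .neg (substV v ψ φ)
  | .and φ₁ φ₂ => .and (substV v ψ φ₁) (substV v ψ φ₂)
  | .k i φ => .k i (substV v ψ φ)
  | .a i φ => .a i (substV v ψ φ)
  | .x i φ => .x i (substV v ψ φ)
  | .all u φ => if u = v then .all u φ else .all u (substV v ψ φ)

def substP (q : ℕ) (ψ : Fm) : Fm → Fm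
  | .prop p => if p = q then ψ else .prop p
  | .var u => .var u
  | .neg φ => .neg (substP q ψ φ)
  | .and φ₁ φ₂ => .and (substP q ψ φ₁) (substP q ψ φ₂)
  | .k i φ => .k i (substP q ψ φ)
  | .a i φ => .a i (substP q ψ φ)
  | .x i φ => .x i (substP q ψ φ)
  | .all u φ => .all u (substP q ψ φ)

/-- Primitive propositions of a formula, as a list. -/
def propList : Fm → List ℕ
  | .prop p => [p]
  | .var _ => []
  | .neg φ => propList φ
  | .and φ ψ => propList φ ++ propList ψ
  | .k _ φ => propList φ
  | .a _ φ => propList φ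
  | .x _ φ => propList φ
  | .all _ φ => propList φ

def or (φ ψ : Fm) : Fm := .neg (.and (.neg φ) (.neg ψ))
def imp (φ ψ : Fm) : Fm := Fm.or (.neg φ) ψ
def iff (φ ψ : Fm) : Fm := .and (imp φ ψ) (imp ψ φ)
def top : Fm := Fm.or (.prop 0) (.neg (.prop 0))
def bot : Fm := .neg top

/-- Boolean evaluation of the propositional skeleton of a formula, treating
everything other than `¬` and `∧` as an atom.  `∀ v, beval v φ = true` says
exactly that `φ` is a substitution instance of a propositional tautology. -/
def beval (v : Fm → Bool) : Fm → Bool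
  | .neg φ => ! beval v φ
  | .and φ ψ => beval v φ && beval v ψ
  | φ => v φ

end Fm

/-- Conjunction of a list of formulas (the empty conjunction is `⊤`). -/
def conj : List Fm → Fm
  | [] => Fm.top
  | φ :: l => Fm.and φ (conj l)

/-- The theorems of the axiom system `AX^{X,A,∀}_e`:
Prop, AGPP, XA, FA*_X, K_X, A0_X, 1_∀, K_∀, N_∀, Barcan*_X, MP, Gen_X, Gen_∀. -/
inductive Thm : Fm → Prop
  | taut (φ : Fm) (h : ∀ v : Fm → Bool, Fm.beval v φ = true) : Thm φ
  | agppAx (i : ℕ) (φ : Fm) :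
      Thm (Fm.iff (.a i φ) (conj ((Fm.propList φ).map fun p => Fm.a i (.prop p))))
  | xaAx (i : ℕ) (φ : Fm) : Thm (Fm.imp (.a i φ) (.x i (.a i φ)))
  | faAx (i x : ℕ) :
      Thm (Fm.imp (.all x (.neg (.a i (.var x)))) (.x i (.all x (.neg (.a i (.var x))))))
  | kAx (i : ℕ) (φ ψ : Fm) :
      Thm (Fm.imp (.and (.x i φ) (.x i (Fm.imp φ ψ))) (.x i ψ))
  | a0Ax (i : ℕ) (φ : Fm) : Thm (Fm.imp (.x i φ) (.a i φ))
  | oneAll (x : ℕ) (φ ψ : Fm) (h1 : Fm.qcount ψ = 0) (h2 : Fm.free ψ = ∅) :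
      Thm (Fm.imp (.all x φ) (Fm.substV x ψ φ))
  | kAll (x : ℕ) (φ ψ : Fm) :
      Thm (Fm.imp (.all x (Fm.imp φ ψ)) (Fm.imp (.all x φ) (.all x ψ)))
  | nAll (x : ℕ) (φ : Fm) (h : x ∉ Fm.free φ) : Thm (Fm.imp φ (.all x φ))
  | barcanAx (i x : ℕ) (φ : Fm) :
      Thm (Fm.imp (.and (.a i (.all x φ)) (.all x (Fm.imp (.a i (.var x)) (.x i φ))))
                  (.x i (Fm.imp (.all x (.a i (.var x))) (.all x φ))))
  | mp (φ ψ : Fm) : Thm (Fm.imp φ ψ) → Thm φ → Thm ψ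
  | genX (i : ℕ) (φ : Fm) : Thm φ → Thm (Fm.imp (.a i φ) (.x i φ))
  | genAll (x q : ℕ) (φ : Fm) : Thm φ → Thm (.all x (Fm.substP q (.var x) φ))

/-- `Γ ⊢ φ`: derivable from finitely many members of `Γ` and theorems of
`AX^{X,A,∀}_e` by modus ponens. -/
def Derivable (Γ : Set Fm) (φ : Fm) : Prop :=
  ∃ l : List Fm, (∀ ψ ∈ l, ψ ∈ Γ) ∧ Thm (Fm.imp (conj l) φ)

def Consistent (Γ : Set Fm) : Prop := ¬ Derivable Γ Fm.bot

/-- `Γ` is acceptable with respect to `L`: whenever `φ` is a formula over `L`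
with (at most) the free variable `x` and `Γ ⊢ φ[x/q]` for all but finitely many
primitive propositions `q ∈ L`, then `Γ ⊢ ∀x φ`. -/
def Acceptable (Γ : Set Fm) (L : Set ℕ) : Prop :=
  ∀ (x : ℕ) (φ : Fm), Fm.props φ ⊆ L → Fm.free φ ⊆ {x} →
    {q ∈ L | ¬ Derivable Γ (Fm.substV x (.prop q) φ)}.Finite →
    Derivable Γ (.all x φ)

/-- `Γ` is a maximal consistent set of sentences with respect to `L`. -/
def MaxConsistent (Γ : Set Fm) (L : Set ℕ) : Prop :=
  (∀ φ ∈ Γ, Fm.props φ ⊆ L ∧ Fm.free φ = ∅) ∧ Consistent Γ ∧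
    ∀ φ : Fm, Fm.props φ ⊆ L → Fm.free φ = ∅ → Consistent (insert φ Γ) → φ ∈ Γ


-- AUX START
deriving instance DecidableEq for Fm

namespace Fm

def code : Fm → ℕ
  | .prop p => Nat.pair 0 p
  | .var v => Nat.pair 1 v
  | .neg φ => Nat.pair 2 φ.code
  | .and φ ψ => Nat.pair 3 (Nat.pair φ.code ψ.code)
  | .k i φ => Nat.pair 4 (Nat.pair i φ.code)
  | .a i φ => Nat.pair 5 (Nat.pair i φ.code)
  | .x i φ => Nat.pair 6 (Nat.pair i φ.code)
  | .all v φ => Nat.pair 7 (Nat.pair v φ.code)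

lemma code_inj : ∀ φ ψ : Fm, code φ = code ψ → φ = ψ := by
  intro φ
  induction φ <;> intro ψ <;> cases ψ <;>
    simp_all [code, Nat.pair_eq_pair] <;> aesop

instance : Countable Fm := ⟨code, code_inj⟩
instance : Nonempty Fm := ⟨.prop 0⟩

@[simp] lemma beval_neg (v : Fm → Bool) (φ : Fm) : beval v (.neg φ) = !beval v φ := rfl
@[simp] lemma beval_and (v : Fm → Bool) (φ ψ : Fm) :
    beval v (.and φ ψ) = (beval v φ && beval v ψ) := rfl
@[simp] lemma beval_or (v : Fm → Bool) (φ ψ : Fm) :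
    beval v (Fm.or φ ψ) = (beval v φ || beval v ψ) := by
  simp [Fm.or]
@[simp] lemma beval_imp (v : Fm → Bool) (φ ψ : Fm) :
    beval v (Fm.imp φ ψ) = (!beval v φ || beval v ψ) := by
  simp [Fm.imp]
@[simp] lemma beval_top (v : Fm → Bool) : beval v top = true := by
  simp [Fm.top]
@[simp] lemma beval_bot (v : Fm → Bool) : beval v bot = false := by
  simp [Fm.bot]

lemma free_imp (φ ψ : Fm) : free (Fm.imp φ ψ) = free φ ∪ free ψ := rfl
lemma props_imp (φ ψ : Fm) : props (Fm.imp φ ψ) = props φ ∪ props ψ := rfl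
lemma substV_imp (x : ℕ) (t φ ψ : Fm) :
    substV x t (Fm.imp φ ψ) = Fm.imp (substV x t φ) (substV x t ψ) := rfl

lemma substV_of_not_free (x : ℕ) (t : Fm) :
    ∀ φ : Fm, x ∉ free φ → substV x t φ = φ := by
  intro φ
  induction φ with
  | prop p => intro _; rfl
  | var u => intro h; simp [free] at h; simp [substV, Ne.symm h]
  | neg φ ih => intro h; simp [free] at h; simp [substV, ih h]
  | and φ ψ ih1 ih2 =>
      intro h; simp [free] at h; simp [substV, ih1 h.1, ih2 h.2]
  | k i φ ih => intro h; simp [free] at h; simp [substV, ih h]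
  | a i φ ih => intro h; simp [free] at h; simp [substV, ih h]
  | x i φ ih => intro h; simp [free] at h; simp [substV, ih h]
  | all u φ ih =>
      intro h
      by_cases hu : u = x
      · simp [substV, hu]
      · have : x ∉ free φ := by
          intro hx; exact h (by simp [free, hx, Ne.symm hu])
        simp [substV, hu, ih this]

lemma free_substV_prop (x q : ℕ) :
    ∀ φ : Fm, free (substV x (.prop q) φ) ⊆ free φ \ {x} := by
  intro φ
  induction φ with
  | prop p => simp [substV, free]
  | var u =>
      by_cases hu : u = x
      · simp [substV, hu, free]
      · simp [substV, hu, free]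
  | neg φ ih => simpa [substV, free] using ih
  | and φ ψ ih1 ih2 =>
      simp only [substV, free]
      intro n hn
      rcases hn with hn | hn
      · rcases ih1 hn with ⟨h1, h2⟩; exact ⟨Or.inl h1, h2⟩
      · rcases ih2 hn with ⟨h1, h2⟩; exact ⟨Or.inr h1, h2⟩
  | k i φ ih => simpa [substV, free] using ih
  | a i φ ih => simpa [substV, free] using ih
  | x i φ ih => simpa [substV, free] using ih
  | all u φ ih =>
      by_cases hu : u = x
      · subst hu
        simp only [substV, if_pos rfl, free]
        intro n hn
        exact ⟨⟨hn.1, hn.2⟩, hn.2⟩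
      · simp only [substV, if_neg hu, free]
        intro n hn
        rcases ih hn.1 with ⟨h1, h2⟩
        exact ⟨⟨h1, hn.2⟩, h2⟩

lemma props_substV_prop (x q : ℕ) :
    ∀ φ : Fm, props (substV x (.prop q) φ) ⊆ props φ ∪ {q} := by
  intro φ
  induction φ with
  | prop p => simp [substV, props]
  | var u =>
      by_cases hu : u = x
      · simp [substV, hu, props]
      · simp [substV, hu, props]
  | neg φ ih => simpa [substV, props] using ih
  | and φ ψ ih1 ih2 =>
      simp only [substV, props]
      intro n hn
      rcases hn with hn | hn
      · rcases ih1 hn with h | h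
        · exact Or.inl (Or.inl h)
        · exact Or.inr h
      · rcases ih2 hn with h | h
        · exact Or.inl (Or.inr h)
        · exact Or.inr h
  | k i φ ih => simpa [substV, props] using ih
  | a i φ ih => simpa [substV, props] using ih
  | x i φ ih => simpa [substV, props] using ih
  | all u φ ih =>
      by_cases hu : u = x
      · simp [substV, hu, props]
      · simpa [substV, hu, props] using ih

end Fm

lemma beval_conj (v : Fm → Bool) : ∀ l : List Fm, Fm.beval v (conj l) = l.all (Fm.beval v) := by
  intro l
  induction l with
  | nil => simp [conj]
  | cons φ l ih => simp [conj, ih]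

/-- `e₁ → (e₂ → ⋯ → ψ)`. -/
def impList (E : List Fm) (ψ : Fm) : Fm := E.foldr Fm.imp ψ

lemma beval_impList (v : Fm → Bool) (ψ : Fm) :
    ∀ E : List Fm, Fm.beval v (impList E ψ) = (!E.all (Fm.beval v) || Fm.beval v ψ) := by
  intro E
  induction E with
  | nil => simp [impList]
  | cons e E ih =>
      simp only [impList, List.foldr_cons, Fm.beval_imp, List.all_cons]
      rw [show E.foldr Fm.imp ψ = impList E ψ from rfl, ih]
      cases Fm.beval v e <;> simp

lemma free_impList (x : ℕ) (ψ : Fm) :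
    ∀ E : List Fm, (∀ e ∈ E, Fm.free e = ∅) → Fm.free ψ ⊆ {x} →
      Fm.free (impList E ψ) ⊆ {x} := by
  intro E
  induction E with
  | nil => intro _ h; exact h
  | cons e E ih =>
      intro hE hψ
      simp only [impList, List.foldr_cons]
      rw [show Fm.imp e (E.foldr Fm.imp ψ) = Fm.imp e (impList E ψ) from rfl, Fm.free_imp,
        hE e (by simp)]
      simpa using ih (fun e he => hE e (by simp [he])) hψ

lemma props_impList (L : Set ℕ) (ψ : Fm) :
    ∀ E : List Fm, (∀ e ∈ E, Fm.props e ⊆ L) → Fm.props ψ ⊆ L →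
      Fm.props (impList E ψ) ⊆ L := by
  intro E
  induction E with
  | nil => intro _ h; exact h
  | cons e E ih =>
      intro hE hψ
      simp only [impList, List.foldr_cons]
      rw [show Fm.imp e (E.foldr Fm.imp ψ) = Fm.imp e (impList E ψ) from rfl, Fm.props_imp]
      exact Set.union_subset (hE e (by simp)) (ih (fun e he => hE e (by simp [he])) hψ)

lemma substV_impList (x : ℕ) (t : Fm) (ψ : Fm) :
    ∀ E : List Fm, (∀ e ∈ E, Fm.free e = ∅) →
      Fm.substV x t (impList E ψ) = impList E (Fm.substV x t ψ) := by
  intro E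
  induction E with
  | nil => intro _; rfl
  | cons e E ih =>
      intro hE
      simp only [impList, List.foldr_cons]
      rw [show Fm.imp e (E.foldr Fm.imp ψ) = Fm.imp e (impList E ψ) from rfl, Fm.substV_imp,
        ih (fun e he => hE e (by simp [he])),
        Fm.substV_of_not_free x t e (by simp [hE e (by simp)])]
      rfl
-- AUX END

-- AUX2 START
open Fm in
lemma thm_conj_mono {l l' : List Fm} (h : ∀ ψ ∈ l, ψ ∈ l') :
    Thm (Fm.imp (conj l') (conj l)) := by
  apply Thm.taut; intro v
  simp only [beval_imp, beval_conj, Bool.or_eq_true, Bool.not_eq_true']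
  cases hb : l'.all (beval v) with
  | false => exact Or.inl rfl
  | true =>
      right
      rw [List.all_eq_true] at hb ⊢
      exact fun ψ hψ => hb ψ (h ψ hψ)

lemma derivable_of_thm {Γ : Set Fm} {φ : Fm} (h : Thm φ) : Derivable Γ φ := by
  refine ⟨[], by simp, ?_⟩
  refine Thm.mp _ _ (Thm.taut (Fm.imp φ (Fm.imp (conj []) φ)) ?_) h
  intro v
  simp only [Fm.beval_imp, beval_conj, List.all_nil]
  cases Fm.beval v φ <;> rfl

lemma derivable_mem {Γ : Set Fm} {φ : Fm} (h : φ ∈ Γ) : Derivable Γ φ := by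
  refine ⟨[φ], by simpa using h, ?_⟩
  apply Thm.taut; intro v
  simp only [Fm.beval_imp, beval_conj, List.all_cons, List.all_nil]
  cases Fm.beval v φ <;> rfl

lemma derivable_mono {Γ Δ : Set Fm} {φ : Fm} (h : Γ ⊆ Δ) :
    Derivable Γ φ → Derivable Δ φ := by
  rintro ⟨l, hl, t⟩
  exact ⟨l, fun a ha => h (hl a ha), t⟩

lemma consistent_mono {Γ Δ : Set Fm} (h : Γ ⊆ Δ) (hc : Consistent Δ) : Consistent Γ :=
  fun hd => hc (derivable_mono h hd)

lemma derivable_mp {Γ : Set Fm} {φ ψ : Fm} (h1 : Derivable Γ (Fm.imp φ ψ))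
    (h2 : Derivable Γ φ) : Derivable Γ ψ := by
  obtain ⟨l1, hl1, t1⟩ := h1
  obtain ⟨l2, hl2, t2⟩ := h2
  refine ⟨l1 ++ l2, ?_, ?_⟩
  · intro a ha; rcases List.mem_append.1 ha with h | h
    exacts [hl1 a h, hl2 a h]
  · have taut : Thm (Fm.imp (Fm.imp (conj l1) (Fm.imp φ ψ))
        (Fm.imp (Fm.imp (conj l2) φ) (Fm.imp (conj (l1 ++ l2)) ψ))) := by
      apply Thm.taut; intro v
      simp only [Fm.beval_imp, beval_conj, List.all_append]
      cases l1.all (Fm.beval v) <;> cases l2.all (Fm.beval v) <;>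
        cases Fm.beval v φ <;> cases Fm.beval v ψ <;> rfl
    exact Thm.mp _ _ (Thm.mp _ _ taut t1) t2

lemma thm_cut {a b c : Fm} (h1 : Thm (Fm.imp a b)) (h2 : Thm (Fm.imp b c)) :
    Thm (Fm.imp a c) := by
  have taut : Thm (Fm.imp (Fm.imp a b) (Fm.imp (Fm.imp b c) (Fm.imp a c))) := by
    apply Thm.taut; intro v
    simp only [Fm.beval_imp]
    cases Fm.beval v a <;> cases Fm.beval v b <;> cases Fm.beval v c <;> rfl
  exact Thm.mp _ _ (Thm.mp _ _ taut h1) h2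

lemma derivable_neg_of_insert {Γ : Set Fm} {χ : Fm}
    (h : Derivable (insert χ Γ) Fm.bot) : Derivable Γ (.neg χ) := by
  classical
  obtain ⟨l, hl, t⟩ := h
  set l' : List Fm := l.filter (fun a => a ≠ χ) with hl'def
  refine ⟨l', ?_, ?_⟩
  · intro a ha
    have h' := List.mem_filter.1 ha
    have hne : a ≠ χ := by simpa using h'.2
    rcases hl a h'.1 with h | h
    · exact absurd h hne
    · exact h
  · have hmono : Thm (Fm.imp (conj (χ :: l')) (conj l)) := by
      refine thm_conj_mono (fun a ha => ?_)
      by_cases hc : a = χ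
      · simp [hc]
      · exact List.mem_cons_of_mem _ (List.mem_filter.2 ⟨ha, by simpa using hc⟩)
    have t2 := thm_cut hmono t
    refine Thm.mp _ _ (Thm.taut (Fm.imp (Fm.imp (conj (χ :: l')) Fm.bot)
      (Fm.imp (conj l') (.neg χ))) ?_) t2
    intro v
    simp only [Fm.beval_imp, Fm.beval_neg, Fm.beval_bot, beval_conj, List.all_cons]
    cases Fm.beval v χ <;> cases l'.all (Fm.beval v) <;> rfl

lemma derivable_bot_of {Γ : Set Fm} {φ : Fm} (h1 : Derivable Γ φ)
    (h2 : Derivable Γ (.neg φ)) : Derivable Γ Fm.bot := by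
  have taut : Thm (Fm.imp φ (Fm.imp (.neg φ) Fm.bot)) := by
    apply Thm.taut; intro v
    simp only [Fm.beval_imp, Fm.beval_neg, Fm.beval_bot]
    cases Fm.beval v φ <;> rfl
  exact derivable_mp (derivable_mp (derivable_of_thm taut) h1) h2

lemma derivable_of_dneg {Γ : Set Fm} {φ : Fm} (h : Derivable Γ (.neg (.neg φ))) :
    Derivable Γ φ := by
  have taut : Thm (Fm.imp (.neg (.neg φ)) φ) := by
    apply Thm.taut; intro v
    simp only [Fm.beval_imp, Fm.beval_neg]
    cases Fm.beval v φ <;> rfl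
  exact derivable_mp (derivable_of_thm taut) h

lemma consistent_insert_neg {Γ : Set Fm} {φ : Fm} (h : ¬ Derivable Γ φ) :
    Consistent (insert (Fm.neg φ) Γ) := by
  intro hbot
  exact h (derivable_of_dneg (derivable_neg_of_insert hbot))

lemma not_consistent_insert {Γ : Set Fm} {χ : Fm} (h : ¬ Consistent (insert χ Γ)) :
    Derivable Γ (.neg χ) :=
  derivable_neg_of_insert (not_not.1 h)

lemma thm_impList_intro {A E : List Fm} {ψ : Fm}
    (h : Thm (Fm.imp (conj (A ++ E)) ψ)) : Thm (Fm.imp (conj A) (impList E ψ)) := by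
  refine Thm.mp _ _ (Thm.taut (Fm.imp (Fm.imp (conj (A ++ E)) ψ)
    (Fm.imp (conj A) (impList E ψ))) ?_) h
  intro v
  simp only [Fm.beval_imp, beval_conj, beval_impList, List.all_append]
  cases A.all (Fm.beval v) <;> cases E.all (Fm.beval v) <;> cases Fm.beval v ψ <;> rfl

lemma thm_impList_elim {A E : List Fm} {ψ : Fm}
    (h : Thm (Fm.imp (conj A) (impList E ψ))) : Thm (Fm.imp (conj (A ++ E)) ψ) := by
  refine Thm.mp _ _ (Thm.taut (Fm.imp (Fm.imp (conj A) (impList E ψ))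
    (Fm.imp (conj (A ++ E)) ψ)) ?_) h
  intro v
  simp only [Fm.beval_imp, beval_conj, beval_impList, List.all_append]
  cases A.all (Fm.beval v) <;> cases E.all (Fm.beval v) <;> cases Fm.beval v ψ <;> rfl

lemma derivable_union_list {Γ : Set Fm} {E : List Fm} {ψ : Fm} :
    Derivable (Γ ∪ {a | a ∈ E}) ψ ↔ Derivable Γ (impList E ψ) := by
  classical
  constructor
  · rintro ⟨l, hl, t⟩
    set l' : List Fm := l.filter (fun a => ¬ a ∈ E) with hl'def
    refine ⟨l', ?_, ?_⟩
    · intro a ha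
      have h' := List.mem_filter.1 ha
      have hne : ¬ a ∈ E := by simpa using h'.2
      rcases hl a h'.1 with h | h
      · exact h
      · exact absurd h hne
    · have hmono : Thm (Fm.imp (conj (l' ++ E)) (conj l)) := by
        refine thm_conj_mono (fun a ha => ?_)
        by_cases hc : a ∈ E
        · exact List.mem_append.2 (Or.inr hc)
        · exact List.mem_append.2 (Or.inl (List.mem_filter.2 ⟨ha, by simpa using hc⟩))
      exact thm_impList_intro (thm_cut hmono t)
  · rintro ⟨l, hl, t⟩
    refine ⟨l ++ E, ?_, thm_impList_elim t⟩
    intro a ha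
    rcases List.mem_append.1 ha with h | h
    · exact Or.inl (hl a h)
    · exact Or.inr h

lemma derivable_all_of_impList {Δ : Set Fm} {x : ℕ} {φ : Fm} :
    ∀ E : List Fm, (∀ e ∈ E, e ∈ Δ) → (∀ e ∈ E, Fm.free e = ∅) →
      Derivable Δ (.all x (impList E φ)) → Derivable Δ (.all x φ) := by
  intro E
  induction E with
  | nil => intro _ _ h; exact h
  | cons e E ih =>
      intro hmem hfree h
      have h1 : Derivable Δ (Fm.imp (.all x (Fm.imp e (impList E φ)))
          (Fm.imp (.all x e) (.all x (impList E φ)))) :=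
        derivable_of_thm (Thm.kAll x e (impList E φ))
      have h2 : Derivable Δ (Fm.imp (.all x e) (.all x (impList E φ))) :=
        derivable_mp h1 h
      have h3 : Derivable Δ (.all x e) := by
        refine derivable_mp (derivable_of_thm (Thm.nAll x e ?_)) (derivable_mem (hmem e (by simp)))
        simp [hfree e (by simp)]
      exact ih (fun e he => hmem e (by simp [he])) (fun e he => hfree e (by simp [he]))
        (derivable_mp h2 h3)

lemma witness_infinite {L : Set ℕ} {Γ : Set Fm} (hacc : Acceptable Γ L)
    (E : List Fm) (hE : ∀ e ∈ E, Fm.props e ⊆ L ∧ Fm.free e = ∅)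
    (x : ℕ) (φ : Fm) (hp : Fm.props φ ⊆ L) (hf : Fm.free φ ⊆ {x})
    (hno : ¬ Derivable (Γ ∪ {a | a ∈ E}) (.all x φ)) :
    {q ∈ L | ¬ Derivable (Γ ∪ {a | a ∈ E}) (Fm.substV x (.prop q) φ)}.Infinite := by
  by_contra hinf
  have hfin : {q ∈ L | ¬ Derivable (Γ ∪ {a | a ∈ E}) (Fm.substV x (.prop q) φ)}.Finite :=
    Set.not_infinite.1 hinf
  have hEfree : ∀ e ∈ E, Fm.free e = ∅ := fun e he => (hE e he).2
  have hχp : Fm.props (impList E φ) ⊆ L :=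
    props_impList L φ E (fun e he => (hE e he).1) hp
  have hχf : Fm.free (impList E φ) ⊆ {x} := free_impList x φ E hEfree hf
  have hsub : {q ∈ L | ¬ Derivable Γ (Fm.substV x (.prop q) (impList E φ))}.Finite := by
    refine hfin.subset ?_
    rintro q ⟨hqL, hq⟩
    refine ⟨hqL, fun hd => hq ?_⟩
    rw [substV_impList x (.prop q) φ E hEfree]
    exact derivable_union_list.1 hd
  have hall : Derivable Γ (.all x (impList E φ)) := hacc x (impList E φ) hχp hχf hsub
  refine hno (derivable_all_of_impList E ?_ hEfree
    (derivable_mono Set.subset_union_left hall))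
  intro e he
  exact Or.inr he
-- AUX2 END

-- AUX3 START
lemma union_cons (Γ : Set Fm) (χ : Fm) (E : List Fm) :
    (Γ ∪ {a | a ∈ χ :: E}) = insert χ (Γ ∪ {a | a ∈ E}) := by
  ext a
  simp only [Set.mem_union, Set.mem_setOf_eq, List.mem_cons, Set.mem_insert_iff]
  tauto

/-- Invariant of the construction: finitely many extra sentences over `L`,
jointly consistent with `Γ`. -/
def Inv (L : Set ℕ) (Γ : Set Fm) (E : List Fm) : Prop :=
  (∀ e ∈ E, Fm.props e ⊆ L ∧ Fm.free e = ∅) ∧ Consistent (Γ ∪ {a | a ∈ E})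

/-- What one step of the construction must achieve at stage `n`. -/
def SR (L : Set ℕ) (Γ : Set Fm) (g : ℕ → Fm) (n : ℕ) (E E' : List Fm) : Prop :=
  (∀ a ∈ E, a ∈ E') ∧ Inv L Γ E' ∧
  (Fm.props (g (Nat.unpair n).1) ⊆ L → Fm.free (g (Nat.unpair n).1) = ∅ →
    Consistent (insert (g (Nat.unpair n).1) (Γ ∪ {a | a ∈ E})) →
    g (Nat.unpair n).1 ∈ E') ∧
  (∀ x φ, g (Nat.unpair n).1 = .all x φ →
    ¬ Consistent (insert (.all x φ) (Γ ∪ {a | a ∈ E})) →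
    Fm.props φ ⊆ L → Fm.free φ ⊆ {x} →
    ∃ q ∈ L, n ≤ q ∧ Fm.neg (Fm.substV x (.prop q) φ) ∈ E')

lemma step_exists (L : Set ℕ) (Γ : Set Fm) (hacc : Acceptable Γ L) (g : ℕ → Fm)
    (n : ℕ) (E : List Fm) (hE : Inv L Γ E) : ∃ E', SR L Γ g n E E' := by
  classical
  by_cases h1 : Fm.props (g (Nat.unpair n).1) ⊆ L ∧ Fm.free (g (Nat.unpair n).1) = ∅
  · by_cases h2 : Consistent (insert (g (Nat.unpair n).1) (Γ ∪ {a | a ∈ E}))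
    · refine ⟨g (Nat.unpair n).1 :: E, fun a ha => List.mem_cons_of_mem _ ha,
        ⟨?_, ?_⟩, fun _ _ _ => List.mem_cons_self, ?_⟩
      · intro e he; rcases List.mem_cons.1 he with rfl | he
        exacts [h1, hE.1 e he]
      · rw [union_cons]; exact h2
      · intro x φ hgall hnc _ _
        rw [hgall] at h2
        exact absurd h2 hnc
    · by_cases hallform : ∃ y φ0, g (Nat.unpair n).1 = .all y φ0
      · obtain ⟨y, φ0, hgeq⟩ := hallform
        rw [hgeq] at h2
        obtain ⟨hp1, hf1⟩ := h1
        rw [hgeq] at hp1 hf1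
        have hpφ : Fm.props φ0 ⊆ L := by simpa [Fm.props] using hp1
        have hfφ : Fm.free φ0 ⊆ {y} := by
          refine Set.diff_eq_empty.1 ?_
          simpa [Fm.free] using hf1
        have hno : ¬ Derivable (Γ ∪ {a | a ∈ E}) (.all y φ0) := by
          intro hd
          exact hE.2 (derivable_bot_of hd (not_consistent_insert h2))
        have hinf := witness_infinite hacc E hE.1 y φ0 hpφ hfφ hno
        obtain ⟨q, hqmem, hqgt⟩ := hinf.exists_gt n
        obtain ⟨hqL, hqnd⟩ := hqmem
        refine ⟨Fm.neg (Fm.substV y (.prop q) φ0) :: E,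
          fun a ha => List.mem_cons_of_mem _ ha, ⟨?_, ?_⟩, ?_, ?_⟩
        · intro e he; rcases List.mem_cons.1 he with rfl | he
          · constructor
            · have : Fm.props (Fm.substV y (.prop q) φ0) ⊆ L :=
                (Fm.props_substV_prop y q φ0).trans
                  (Set.union_subset hpφ (by simpa using hqL))
              simpa [Fm.props] using this
            · have h' : Fm.free (Fm.substV y (.prop q) φ0) ⊆ (∅ : Set ℕ) :=
                (Fm.free_substV_prop y q φ0).trans (by rw [Set.diff_eq_empty.2 hfφ])
              have : Fm.free (Fm.substV y (.prop q) φ0) = ∅ := Set.subset_empty_iff.1 h'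
              simpa [Fm.free] using this
          · exact hE.1 e he
        · rw [union_cons]
          exact consistent_insert_neg hqnd
        · intro _ _ hc
          rw [hgeq] at hc
          exact absurd hc h2
        · intro x φ hall _ _ _
          rw [hgeq] at hall
          obtain ⟨rfl, rfl⟩ : y = x ∧ φ0 = φ := by
            simpa [Fm.all.injEq] using hall
          exact ⟨q, hqL, le_of_lt hqgt, List.mem_cons_self⟩
      · refine ⟨E, fun a ha => ha, hE, fun _ _ hc => absurd hc h2, ?_⟩
        intro x φ hall
        exact absurd ⟨x, φ, hall⟩ hallform
  · refine ⟨E, fun a ha => ha, hE, ?_, ?_⟩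
    · intro hp hfr _; exact absurd ⟨hp, hfr⟩ h1
    · intro x φ hall hnc hp hf'
      exfalso
      apply h1
      rw [hall]
      refine ⟨by simpa [Fm.props] using hp, ?_⟩
      have : Fm.free φ \ {x} = ∅ := Set.diff_eq_empty.2 hf'
      simpa [Fm.free] using this
-- AUX3 END

/-- Lindenbaum lemma for acceptable sets: an acceptable consistent set of sentences
over `L` extends to an acceptable maximal consistent set with respect to `L`. -/
theorem stmt17 (L : Set ℕ) (Γ : Set Fm)
    (hΓ : ∀ φ ∈ Γ, Fm.props φ ⊆ L ∧ Fm.free φ = ∅)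
    (hcons : Consistent Γ) (hacc : Acceptable Γ L) :
    ∃ Δ : Set Fm, Γ ⊆ Δ ∧ Acceptable Δ L ∧ MaxConsistent Δ L := by
  classical
  obtain ⟨g, hg⟩ := exists_surjective_nat Fm
  have inv0 : Inv L Γ [] := by
    refine ⟨by simp, ?_⟩
    have h : (Γ ∪ {a | a ∈ ([] : List Fm)}) = Γ := by simp
    rw [h]; exact hcons
  have stepex : ∀ (n : ℕ) (E : List Fm), Inv L Γ E → ∃ E', SR L Γ g n E E' :=
    fun n E h => step_exists L Γ hacc g n E h
  choose step hstep using stepex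
  let f : ℕ → {E : List Fm // Inv L Γ E} :=
    fun n => Nat.rec ⟨[], inv0⟩ (fun n p => ⟨step n p.1 p.2, (hstep n p.1 p.2).2.1⟩) n
  have hf : ∀ n, SR L Γ g n (f n).1 (f (n + 1)).1 := fun n => hstep n (f n).1 (f n).2
  set Δ : Set Fm := Γ ∪ ⋃ n, {a | a ∈ (f n).1} with hΔdef
  have hsubΓ : Γ ⊆ Δ := Set.subset_union_left
  have hstage : ∀ n, (Γ ∪ {a | a ∈ (f n).1}) ⊆ Δ := by
    intro n a ha
    rcases ha with h | h
    · exact Or.inl h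
    · exact Or.inr (Set.mem_iUnion.2 ⟨n, h⟩)
  have hmemΔ : ∀ n a, a ∈ (f n).1 → a ∈ Δ := fun n a h => hstage n (Or.inr h)
  have hchain : ∀ m n, m ≤ n → ∀ a ∈ (f m).1, a ∈ (f n).1 := by
    intro m n h
    induction h with
    | refl => exact fun a ha => ha
    | step h ih => exact fun a ha => (hf _).1 a (ih a ha)
  have hΔsent : ∀ φ ∈ Δ, Fm.props φ ⊆ L ∧ Fm.free φ = ∅ := by
    intro φ hφ
    rcases hφ with h | h
    · exact hΓ φ h
    · obtain ⟨n, hn⟩ := Set.mem_iUnion.1 h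
      exact (f n).2.1 φ hn
  have hfind : ∀ l : List Fm, (∀ ψ ∈ l, ψ ∈ Δ) →
      ∃ N, ∀ ψ ∈ l, ψ ∈ Γ ∪ {a | a ∈ (f N).1} := by
    intro l
    induction l with
    | nil => intro _; exact ⟨0, by simp⟩
    | cons ψ l ih =>
        intro h
        obtain ⟨N, hN⟩ := ih (fun a ha => h a (by simp [ha]))
        rcases h ψ (by simp) with hψ | hψ
        · refine ⟨N, ?_⟩
          intro a ha
          rcases List.mem_cons.1 ha with rfl | ha
          · exact Or.inl hψ
          · exact hN a ha
        · obtain ⟨n, hn⟩ := Set.mem_iUnion.1 hψ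
          refine ⟨max N n, ?_⟩
          intro a ha
          rcases List.mem_cons.1 ha with rfl | ha
          · exact Or.inr (hchain n _ (le_max_right _ _) a hn)
          · rcases hN a ha with h' | h'
            · exact Or.inl h'
            · exact Or.inr (hchain N _ (le_max_left _ _) a h')
  have hΔcons : Consistent Δ := by
    rintro ⟨l, hl, t⟩
    obtain ⟨N, hN⟩ := hfind l hl
    exact (f N).2.2 ⟨l, hN, t⟩
  have hmax : ∀ χ : Fm, Fm.props χ ⊆ L → Fm.free χ = ∅ →
      Consistent (insert χ Δ) → χ ∈ Δ := by
    intro χ hp hfr hc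
    obtain ⟨m, hm⟩ := hg χ
    have h3 := (hf (Nat.pair m 0)).2.2.1
    simp only [Nat.unpair_pair] at h3
    rw [hm] at h3
    have hcons' : Consistent (insert χ (Γ ∪ {a | a ∈ (f (Nat.pair m 0)).1})) :=
      consistent_mono (Set.insert_subset_insert (hstage _)) hc
    exact hmemΔ (Nat.pair m 0 + 1) _ (h3 hp hfr hcons')
  have hacc' : Acceptable Δ L := by
    intro x φ hp hfr hfin
    by_cases hc : Consistent (insert (.all x φ) Δ)
    · have hfx : Fm.free (Fm.all x φ) = ∅ := by
        have : Fm.free φ \ {x} = ∅ := Set.diff_eq_empty.2 hfr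
        simpa [Fm.free] using this
      have hpx : Fm.props (Fm.all x φ) ⊆ L := by simpa [Fm.props] using hp
      exact derivable_mem (hmax _ hpx hfx hc)
    · exfalso
      obtain ⟨m, hm⟩ := hg (.all x φ)
      have hbig : ∀ k : ℕ, ∃ q, (q ∈ L ∧ ¬ Derivable Δ (Fm.substV x (.prop q) φ)) ∧ k ≤ q := by
        intro k
        have h3 := (hf (Nat.pair m k)).2.2.1
        have h4 := (hf (Nat.pair m k)).2.2.2
        simp only [Nat.unpair_pair] at h3 h4
        rw [hm] at h3
        have hfx : Fm.free (Fm.all x φ) = ∅ := by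
          have : Fm.free φ \ {x} = ∅ := Set.diff_eq_empty.2 hfr
          simpa [Fm.free] using this
        have hpx : Fm.props (Fm.all x φ) ⊆ L := by simpa [Fm.props] using hp
        have hnc : ¬ Consistent (insert (.all x φ)
            (Γ ∪ {a | a ∈ (f (Nat.pair m k)).1})) := by
          intro hcons'
          have hmem := h3 hpx hfx hcons'
          have hin : (Fm.all x φ) ∈ Δ := hmemΔ (Nat.pair m k + 1) _ hmem
          apply hc
          rw [Set.insert_eq_self.2 hin]
          exact hΔcons
        obtain ⟨q, hqL, hq1, hq2⟩ := h4 x φ hm hnc hp hfr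
        refine ⟨q, ⟨hqL, ?_⟩, le_trans (Nat.right_le_pair m k) hq1⟩
        intro hd
        exact hΔcons (derivable_bot_of hd (derivable_mem (hmemΔ (Nat.pair m k + 1) _ hq2)))
      obtain ⟨B, hB⟩ := hfin.bddAbove
      obtain ⟨q, hq, hqB⟩ := hbig (B + 1)
      have := hB hq
      omega
  exact ⟨Δ, hsubΓ, hacc', hΔsent, hΔcons, hmax⟩

end AwarenessPaper
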